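/- arXiv:1411.3320 — 2 statements merged into one kernel-verified Lean document; each statement's English description precedes it below -/
import Mathlib

section
/- Consider a graphical multi-hypermatrix game, a player i ∈ V, and two joint mixed strategies p and q; write Δ_j(a) = p_j(a) − q_j(a). For each clique C ∈ 𝒞_i and disjoint subsets, let M'_{i,C}(p_i, u_B, q_T) = Σ_{x_C ∈ ∏_{j∈C} A_j} p_i(x_i) (∏_{k∈B} u_k(x_k)) (∏_{l∈T} q_l(x_l)) M'_{i,C}(x_C) whenever {i} ∪ B ∪ T = C. Then M_i(p) − Σ_{C∈𝒞_i} M'_{i,C}(p_i, q_{C∖{i}}) = Σ_{C∈𝒞_i} Σ over nonempty subsets B ⊆ C∖{i} of M'_{i,C}(p_i, Δ_B, q_{C∖{i}∖B}). In words: the difference between player i's expected payoff under p and the expected payoff when i plays p_i while all other players play according to q equals the sum, over cliques of i and nonempty subsets B of the other clique members, of the multilinearly expanded difference terms. -/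
open Finset

variable {V : Type*} [Fintype V] [DecidableEq V]
variable {A : V → Type*} [∀ i, Fintype (A i)] [∀ i, DecidableEq (A i)]
  [∀ i, Nonempty (A i)]

/-- `p` is a joint mixed strategy. -/
def IsMixed {V : Type*} {A : V → Type*} [∀ i, Fintype (A i)]
    (p : ∀ i, A i → ℝ) : Prop :=
  ∀ i, (∀ a, 0 ≤ p i a) ∧ ∑ a, p i a = 1

/-- Expected value of `M` under the product of the weight functions `w i`. -/
def expPay (w : ∀ i, A i → ℝ) (M : (∀ i, A i) → ℝ) : ℝ :=
  ∑ x : ∀ i, A i, (∏ i, w i (x i)) * M x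

/-- Player `i`'s global payoff in a graphical multi-hypermatrix game with
clique systems `𝒞` and local-clique payoff hypermatrices `M'`:
`M_i(x) = Σ_{C ∈ 𝒞 i} M'_{i,C}(x_C)`. -/
def gmhgPay (𝒞 : V → Finset (Finset V))
    (M' : (i : V) → (C : Finset V) → ((j : C) → A j) → ℝ)
    (i : V) (x : ∀ j, A j) : ℝ :=
  ∑ C ∈ 𝒞 i, M' i C (fun j => x j.1)

/-- The weighted sum of a local-clique payoff hypermatrix `g` on clique `C`,
where each coordinate `j ∈ C` is summed out with weight `w j`. -/
def cliqueExp (C : Finset V) (w : ∀ j, A j → ℝ)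
    (g : ((j : C) → A j) → ℝ) : ℝ :=
  ∑ z : (j : C) → A j, (∏ j : C, w j.1 (z j)) * g z

set_option linter.unusedSectionVars false in
/-- Marginalization: expectation of a clique-restricted function. -/
theorem expPay_restrict (C : Finset V) (w : ∀ j, A j → ℝ) (hw : ∀ j, ∑ a, w j a = 1)
    (g : ((j : C) → A j) → ℝ) :
    ∑ x : ∀ i, A i, (∏ i, w i (x i)) * g (fun j => x j.1) =
    ∑ z : (j : C) → A j, (∏ j : C, w j.1 (z j)) * g z := by
  rw [← Equiv.sum_comp (Equiv.piEquivPiSubtypeProd (· ∈ C) A).symm]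
  rw [Fintype.sum_prod_type]
  refine Fintype.sum_congr _ _ fun z => ?_
  have key : ∀ y : (j : {x // ¬ x ∈ C}) → A j,
      (∏ i, w i ((Equiv.piEquivPiSubtypeProd (· ∈ C) A).symm (z, y) i)) =
      (∏ j : {x // x ∈ C}, w j.1 (z j)) * ∏ j : {x // ¬ x ∈ C}, w j.1 (y j) := by
    intro y
    rw [← Fintype.prod_subtype_mul_prod_subtype (· ∈ C)
      (fun i => w i ((Equiv.piEquivPiSubtypeProd (· ∈ C) A).symm (z, y) i))]
    congr 1
    · refine Finset.prod_congr (by congr!) fun j _ => ?_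
      simp [Equiv.piEquivPiSubtypeProd_symm_apply, j.2]
    · refine Finset.prod_congr (by congr!) fun j _ => ?_
      simp [Equiv.piEquivPiSubtypeProd_symm_apply, j.2]
  have hg : ∀ y : (j : {x // ¬ x ∈ C}) → A j,
      g (fun j => (Equiv.piEquivPiSubtypeProd (· ∈ C) A).symm (z, y) j.1) = g z := by
    intro y
    congr 1
    funext j
    simp [Equiv.piEquivPiSubtypeProd_symm_apply, j.2]
  calc ∑ y, (∏ i, w i ((Equiv.piEquivPiSubtypeProd (· ∈ C) A).symm (z, y) i)) *
        g (fun j => (Equiv.piEquivPiSubtypeProd (· ∈ C) A).symm (z, y) j.1)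
      = ∑ y : (j : {x // ¬ x ∈ C}) → A j,
          ((∏ j : {x // x ∈ C}, w j.1 (z j)) * g z) * ∏ j : {x // ¬ x ∈ C}, w j.1 (y j) := by
        refine Fintype.sum_congr _ _ fun y => ?_
        rw [key y, hg y]; ring
    _ = (∏ j : {x // x ∈ C}, w j.1 (z j)) * g z := by
        rw [← Finset.mul_sum, ← Fintype.prod_sum]
        simp [hw]

set_option linter.unusedSectionVars false in
/-- Multilinear expansion of the product of weights on a clique. -/
theorem prod_expand (C : Finset V) (i : V) (hi : i ∈ C) (p q : ∀ j, A j → ℝ)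
    (z : (j : C) → A j) :
    (∏ j : C, p j.1 (z j)) =
    ∑ B ∈ (C.erase i).powerset,
      ∏ j : C, (Function.update
        (fun j => if j ∈ B then (fun a => p j a - q j a) else q j) i (p i)) j.1 (z j) := by
  set ii : {x // x ∈ C} := ⟨i, hi⟩ with hii
  have hmem : ii ∈ (univ : Finset {x // x ∈ C}) := mem_univ _
  rw [← Finset.mul_prod_erase univ (fun j => p j.1 (z j)) hmem]
  have expand : ∏ j ∈ univ.erase ii, p j.1 (z j) =
      ∑ t ∈ (univ.erase ii).powerset,
        (∏ j ∈ t, (p j.1 (z j) - q j.1 (z j))) * ∏ j ∈ (univ.erase ii) \ t, q j.1 (z j) := by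
    rw [← Finset.prod_add]
    exact Finset.prod_congr rfl fun j _ => by ring
  rw [expand, Finset.mul_sum]
  refine Finset.sum_bij (fun t _ => t.image Subtype.val) ?_ ?_ ?_ ?_
  · intro t ht
    rw [Finset.mem_powerset] at ht ⊢
    intro b hb
    obtain ⟨j, hj, rfl⟩ := Finset.mem_image.1 hb
    have := ht hj
    rw [Finset.mem_erase] at this
    exact Finset.mem_erase.2 ⟨fun h => this.1 (Subtype.ext h), j.2⟩
  · intro t1 h1 t2 h2 h
    exact Finset.image_injective Subtype.val_injective h
  · intro B hB
    rw [Finset.mem_powerset] at hB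
    refine ⟨univ.filter (fun j => j.1 ∈ B), ?_, ?_⟩
    · rw [Finset.mem_powerset]
      intro j hj
      rw [Finset.mem_filter] at hj
      exact Finset.mem_erase.2 ⟨fun h => (Finset.mem_erase.1 (hB hj.2)).1 (h ▸ rfl), mem_univ _⟩
    · ext b
      simp only [Finset.mem_image, Finset.mem_filter, mem_univ, true_and]
      constructor
      · rintro ⟨j, hj, rfl⟩; exact hj
      · intro hb; exact ⟨⟨b, (Finset.erase_subset _ _) (hB hb)⟩, hb, rfl⟩
  · intro t ht
    rw [Finset.mem_powerset] at ht
    set B := t.image Subtype.val with hB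
    have hit : ∀ j : {x // x ∈ C}, j ∈ t → j ≠ ii := fun j hj => (Finset.mem_erase.1 (ht hj)).1
    have hmemB : ∀ j : {x // x ∈ C}, (j.1 ∈ B ↔ j ∈ t) := by
      intro j
      simp only [hB, Finset.mem_image]
      constructor
      · rintro ⟨k, hk, h⟩; rwa [Subtype.ext h] at hk
      · intro h; exact ⟨j, h, rfl⟩
    rw [← Finset.mul_prod_erase univ
      (fun j => (Function.update (fun j => if j ∈ B then (fun a => p j a - q j a) else q j) i (p i)) j.1 (z j)) hmem]
    have h1 : (Function.update (fun j => if j ∈ B then (fun a => p j a - q j a) else q j) i (p i)) ii.1 (z ii)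
        = p i (z ii) := by
      show (Function.update (fun j => if j ∈ B then (fun a => p j a - q j a) else q j) i (p i)) i (z ii) = _
      rw [Function.update_self]
    have h2 : ∏ j ∈ univ.erase ii,
        (Function.update (fun j => if j ∈ B then (fun a => p j a - q j a) else q j) i (p i)) j.1 (z j)
        = (∏ j ∈ t, (p j.1 (z j) - q j.1 (z j))) * ∏ j ∈ (univ.erase ii) \ t, q j.1 (z j) := by
      rw [← Finset.prod_filter_mul_prod_filter_not (univ.erase ii) (fun j => j ∈ t)]
      congr 1
      · rw [Finset.filter_mem_eq_inter, Finset.inter_eq_right.2 ht]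
        refine Finset.prod_congr rfl fun j hj => ?_
        have hne : j.1 ≠ i := fun h => hit j hj (Subtype.ext h)
        rw [Function.update_of_ne hne]
        simp [(hmemB j).2 hj]
      · rw [Finset.filter_not, Finset.filter_mem_eq_inter, Finset.inter_eq_right.2 ht]
        refine Finset.prod_congr rfl fun j hj => ?_
        rw [Finset.mem_sdiff] at hj
        have hne : j.1 ≠ i := fun h => (Finset.mem_erase.1 hj.1).1 (Subtype.ext h)
        rw [Function.update_of_ne hne]
        have : ¬ (j.1 ∈ B) := fun h => hj.2 ((hmemB j).1 h)
        simp [this]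
    rw [h1, h2]

/-- The multilinear difference expansion of player `i`'s expected payoff in
a GMhG: `M_i(p) − Σ_{C∈𝒞_i} M'_{i,C}(p_i, q_{C∖{i}})` equals the sum over
cliques `C ∈ 𝒞_i` and nonempty subsets `B ⊆ C∖{i}` of
`M'_{i,C}(p_i, Δ_B, q_{C∖{i}∖B})`, where `Δ_j = p_j − q_j`. -/
theorem gmhg_expected_payoff_expansion (𝒞 : V → Finset (Finset V))
    (M' : (i : V) → (C : Finset V) → ((j : C) → A j) → ℝ)
    (i : V) (hC : ∀ C ∈ 𝒞 i, i ∈ C)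
    (p q : ∀ j, A j → ℝ) (hp : IsMixed p) (hq : IsMixed q) :
    expPay p (gmhgPay 𝒞 M' i) -
        (∑ C ∈ 𝒞 i, cliqueExp C (Function.update q i (p i)) (M' i C)) =
      ∑ C ∈ 𝒞 i, ∑ B ∈ (C.erase i).powerset.filter (· ≠ ∅),
        cliqueExp C
          (Function.update
            (fun j => if j ∈ B then (fun a => p j a - q j a) else q j)
            i (p i))
          (M' i C) := by
  have step1 : expPay p (gmhgPay 𝒞 M' i) = ∑ C ∈ 𝒞 i, cliqueExp C p (M' i C) := by
    unfold expPay gmhgPay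
    simp_rw [Finset.mul_sum]
    rw [Finset.sum_comm]
    exact Finset.sum_congr rfl fun C _ =>
      expPay_restrict C p (fun j => (hp j).2) (M' i C)
  have step2 : ∀ C ∈ 𝒞 i, cliqueExp C p (M' i C) =
      ∑ B ∈ (C.erase i).powerset,
        cliqueExp C
          (Function.update
            (fun j => if j ∈ B then (fun a => p j a - q j a) else q j) i (p i))
          (M' i C) := by
    intro C hCm
    unfold cliqueExp
    rw [Finset.sum_comm]
    refine Fintype.sum_congr _ _ fun z => ?_
    rw [← Finset.sum_mul, ← prod_expand C i (hC C hCm) p q z]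
  have hempty : ∀ C : Finset V,
      cliqueExp C
        (Function.update
          (fun j => if j ∈ (∅ : Finset V) then (fun a => p j a - q j a) else q j) i (p i))
        (M' i C) = cliqueExp C (Function.update q i (p i)) (M' i C) := by
    intro C
    have : (fun j => if j ∈ (∅ : Finset V) then (fun a => p j a - q j a) else q j) = q := by
      funext j; simp
    rw [this]
  rw [step1, ← Finset.sum_sub_distrib]
  refine Finset.sum_congr rfl fun C hCm => ?_
  rw [step2 C hCm]
  have h0 : (∅ : Finset V) ∈ (C.erase i).powerset := Finset.empty_mem_powerset _
  rw [← Finset.add_sum_erase _ _ h0, hempty C, Finset.filter_ne']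
  ring
end

section
/- Let A be a nonempty finite set, let p : A → ℝ satisfy p(a) ≥ 0 for all a and Σ_{a∈A} p(a) = 1, and let s be a positive integer. Then there exists q : A → ℝ with q(a) ∈ {0, 1/s, 2/s, …, 1} for all a, Σ_{a∈A} q(a) = 1, and |q(a) − p(a)| ≤ 1/s for every a ∈ A. -/
/-- Rounding a probability vector to the uniform grid of step `1/s`:
there is a grid probability vector `q` (values in `{0, 1/s, …, 1}`, summing
to `1`) that is component-wise within `1/s` of `p`. -/
theorem exists_grid_rounding {A : Type*} [Fintype A] [Nonempty A]
    (p : A → ℝ) (hp0 : ∀ a, 0 ≤ p a) (hp1 : ∑ a, p a = 1)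
    (s : ℕ) (hs : 0 < s) :
    ∃ q : A → ℝ, (∀ a, ∃ k : ℕ, k ≤ s ∧ q a = (k : ℝ) / s) ∧
      (∑ a, q a = 1) ∧ ∀ a, |q a - p a| ≤ 1 / s := by
  classical
  have hs' : (0 : ℝ) < s := by exact_mod_cast hs
  set k : A → ℕ := fun a => ⌊(s : ℝ) * p a⌋₊ with hk
  have hkle : ∀ a, (k a : ℝ) ≤ s * p a := fun a => Nat.floor_le (mul_nonneg hs'.le (hp0 a))
  have hklt : ∀ a, (s : ℝ) * p a < k a + 1 := fun a => Nat.lt_floor_add_one _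
  have hsum_le : ∑ a, k a ≤ s := by
    have h : ((∑ a, k a : ℕ) : ℝ) ≤ s := by
      push_cast
      calc ∑ a, (k a : ℝ) ≤ ∑ a, (s : ℝ) * p a :=
            Finset.sum_le_sum fun a _ => hkle a
        _ = s := by rw [← Finset.mul_sum, hp1, mul_one]
    exact_mod_cast h
  set r : ℕ := s - ∑ a, k a with hr
  have hrn : r ≤ Fintype.card A := by
    have h1 : (s : ℝ) < (∑ a, k a : ℕ) + Fintype.card A := by
      have hseq : (s : ℝ) = ∑ a, (s : ℝ) * p a := by
        rw [← Finset.mul_sum, hp1, mul_one]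
      rw [hseq]
      push_cast
      calc ∑ a, (s : ℝ) * p a < ∑ a, ((k a : ℝ) + 1) :=
            Finset.sum_lt_sum_of_nonempty Finset.univ_nonempty fun a _ => hklt a
        _ = ∑ a, (k a : ℝ) + Fintype.card A := by
            rw [Finset.sum_add_distrib]
            simp [Finset.card_univ]
    have h2 : s < ∑ a, k a + Fintype.card A := by exact_mod_cast h1
    omega
  obtain ⟨T, -, hT⟩ := Finset.exists_subset_card_eq (s := (Finset.univ : Finset A)) (n := r)
    (by simpa using hrn)
  have hkb : ∀ a, k a + (if a ∈ T then 1 else 0) ≤ s := by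
    intro a
    have hka : k a ≤ ∑ a, k a :=
      Finset.single_le_sum (fun _ _ => Nat.zero_le _) (Finset.mem_univ a)
    by_cases h : a ∈ T
    · have hr1 : 1 ≤ r := by rw [← hT]; exact Finset.card_pos.mpr ⟨a, h⟩
      simp only [h, if_true]; omega
    · simp only [h, if_false]; omega
  refine ⟨fun a => ((k a + if a ∈ T then 1 else 0 : ℕ) : ℝ) / s, ?_, ?_, ?_⟩
  · exact fun a => ⟨k a + if a ∈ T then 1 else 0, hkb a, rfl⟩
  · have hsum : ∑ a, (k a + if a ∈ T then 1 else 0) = s := by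
      rw [Finset.sum_add_distrib]
      have : ∑ a, (if a ∈ T then 1 else 0) = T.card := by
        rw [Finset.sum_ite_mem, Finset.univ_inter, Finset.card_eq_sum_ones]
      rw [this, hT]
      omega
    rw [← Finset.sum_div]
    rw [show ∑ a, ((k a + if a ∈ T then 1 else 0 : ℕ) : ℝ)
        = ((∑ a, (k a + if a ∈ T then 1 else 0) : ℕ) : ℝ) by push_cast; ring]
    rw [hsum]
    field_simp
  · intro a
    have key : |((k a + if a ∈ T then 1 else 0 : ℕ) : ℝ) - s * p a| ≤ 1 := by
      rw [abs_le]
      by_cases h : a ∈ T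
      · simp only [h, if_true]
        push_cast
        constructor <;> nlinarith [hkle a, hklt a]
      · simp only [h, if_false]
        push_cast
        constructor <;> nlinarith [hkle a, hklt a]
    have heq : ((k a + if a ∈ T then 1 else 0 : ℕ) : ℝ) / s - p a
        = (((k a + if a ∈ T then 1 else 0 : ℕ) : ℝ) - s * p a) / s := by
      field_simp
    rw [heq, abs_div, abs_of_pos hs']
    gcongr
end
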